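/- (Gaussian inequality for symmetric unimodal distributions) Let X be a real random variable with a symmetric unimodal distribution with mode at 0 and variance σ² < ∞. Then for every k > 0, P(|X| ≥ kσ) ≤ 1/(1 + k/√3). -/

import Mathlib

open MeasureTheory ProbabilityTheory
open Set
open scoped ENNReal NNReal


lemma core_ineq (f : ℝ → ℝ) (hf0 : ∀ x, 0 ≤ f x)
    (hmono : AntitoneOn f (Set.Ici 0))
    (hf_int : Integrable f) (hx2f_int : Integrable (fun x => x ^ 2 * f x))
    (t : ℝ) (ht : 0 < t)
    (a b V : ℝ) (ha : a = ∫ x in Set.Ioc 0 t, f x) (hb : b = ∫ x in Set.Ioi t, f x)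
    (hV : V = ∫ x in Set.Ioi t, x ^ 2 * f x) (hab : a + b = 1 / 2) :
    t ^ 2 * b ^ 2 ≤ 6 * V * a ^ 2 := by
  have hb0 : 0 ≤ b := by
    rw [hb]; exact setIntegral_nonneg measurableSet_Ioi (fun x _ => hf0 x)
  have ha0 : 0 ≤ a := by
    rw [ha]; exact setIntegral_nonneg measurableSet_Ioc (fun x _ => hf0 x)
  have hV0 : 0 ≤ V := by
    rw [hV]
    exact setIntegral_nonneg measurableSet_Ioi
      (fun x _ => mul_nonneg (sq_nonneg x) (hf0 x))
  have haft : t * f t ≤ a := by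
    rw [ha]
    have hconst : ∫ _x in Set.Ioc (0:ℝ) t, f t = t * f t := by
      rw [setIntegral_const, measureReal_def, Real.volume_Ioc]
      rw [ENNReal.toReal_ofReal (by linarith)]
      simp [smul_eq_mul]
    rw [← hconst]
    refine setIntegral_mono_on ((integrableOn_const_iff).mpr (Or.inr ?_))
      hf_int.integrableOn measurableSet_Ioc (fun x hx => ?_)
    · rw [Real.volume_Ioc]; exact ENNReal.ofReal_lt_top
    · exact hmono (Set.mem_Ici.mpr hx.1.le) (Set.mem_Ici.mpr ht.le) hx.2
  rcases eq_or_lt_of_le hb0 with hb' | hb'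
  · rw [← hb']
    nlinarith [mul_nonneg hV0 (sq_nonneg a)]
  · -- b > 0
    have hft : 0 < f t := by
      by_contra h
      push_neg at h
      have hft0 : f t = 0 := le_antisymm h (hf0 t)
      have hble : b ≤ 0 := by
        rw [hb]
        have : ∫ x in Set.Ioi t, f x ≤ ∫ _x in Set.Ioi t, (0:ℝ) := by
          refine setIntegral_mono_on hf_int.integrableOn
            ((integrableOn_const_iff).mpr (Or.inl enorm_zero)) measurableSet_Ioi (fun x hx => ?_)
          calc f x ≤ f t := hmono (Set.mem_Ici.mpr ht.le)
                (Set.mem_Ici.mpr (ht.le.trans (le_of_lt hx))) (le_of_lt hx)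
            _ = 0 := hft0
        simpa using this
      linarith
    have ha0' : 0 < a := lt_of_lt_of_le (mul_pos ht hft) haft
    obtain ⟨s, hs⟩ : ∃ s : ℝ, s = t * (a + b) / a := ⟨_, rfl⟩
    have hts : t ≤ s := by
      rw [hs, le_div_iff₀ ha0']; nlinarith
    have hs0 : 0 < s := lt_of_lt_of_le ht hts
    have hM : ∀ x ∈ Set.Ici t, f x ≤ a / t := by
      intro x hx
      have h1 : f x ≤ f t := hmono (Set.mem_Ici.mpr ht.le)
        (Set.mem_Ici.mpr (ht.le.trans hx)) hx
      have h2 : f t ≤ a / t := (le_div_iff₀ ht).mpr (by linarith)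
      linarith
    have hIoi : Set.Ioc t s ∪ Set.Ioi s = Set.Ioi t := Set.Ioc_union_Ioi_eq_Ioi hts
    have hVsplit : V = (∫ x in Set.Ioc t s, x ^ 2 * f x) + ∫ x in Set.Ioi s, x ^ 2 * f x := by
      rw [hV, ← setIntegral_union (Set.Ioc_disjoint_Ioi le_rfl) measurableSet_Ioi
        hx2f_int.integrableOn hx2f_int.integrableOn, hIoi]
    have hbsplit : b = (∫ x in Set.Ioc t s, f x) + ∫ x in Set.Ioi s, f x := by
      rw [hb, ← setIntegral_union (Set.Ioc_disjoint_Ioi le_rfl) measurableSet_Ioi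
        hf_int.integrableOn hf_int.integrableOn, hIoi]
    have h1 : s ^ 2 * (∫ x in Set.Ioi s, f x) ≤ ∫ x in Set.Ioi s, x ^ 2 * f x := by
      rw [← integral_const_mul]
      refine setIntegral_mono_on (hf_int.integrableOn.const_mul _)
        hx2f_int.integrableOn measurableSet_Ioi (fun x hx => ?_)
      have hsx : s ≤ x := le_of_lt hx
      have : s ^ 2 ≤ x ^ 2 := pow_le_pow_left₀ hs0.le hsx 2
      exact mul_le_mul_of_nonneg_right this (hf0 x)
    have h2 : 0 ≤ ∫ x in Set.Ioc t s, (s ^ 2 - x ^ 2) * (a / t - f x) := by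
      refine setIntegral_nonneg measurableSet_Ioc (fun x hx => ?_)
      have hx0 : 0 ≤ x := (ht.trans hx.1).le
      have : x ^ 2 ≤ s ^ 2 := pow_le_pow_left₀ hx0 hx.2 2
      exact mul_nonneg (by linarith) (by linarith [hM x (Set.mem_Ici.mpr hx.1.le)])
    -- integrability of pieces on Ioc t s
    have hI2 : IntegrableOn f (Set.Ioc t s) := hf_int.integrableOn
    have hI1 : IntegrableOn (fun x => x ^ 2 * f x) (Set.Ioc t s) := hx2f_int.integrableOn
    have hI3 : IntegrableOn (fun x : ℝ => x ^ 2) (Set.Ioc t s) :=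
      (continuous_pow 2).integrableOn_Ioc
    have hvol : (volume (Set.Ioc t s)).toReal = s - t := by
      rw [Real.volume_Ioc, ENNReal.toReal_ofReal (by linarith)]
    have hexp : ∫ x in Set.Ioc t s, (s ^ 2 - x ^ 2) * (a / t - f x)
        = s ^ 2 * (a / t) * (s - t) - s ^ 2 * (∫ x in Set.Ioc t s, f x)
          - (a / t) * (∫ x in Set.Ioc t s, x ^ 2) + ∫ x in Set.Ioc t s, x ^ 2 * f x := by
      have heq : (fun x => (s ^ 2 - x ^ 2) * (a / t - f x))
          = fun x => (s ^ 2 * (a / t) - s ^ 2 * f x - a / t * x ^ 2) + x ^ 2 * f x := by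
        funext x; ring
      have hconst : IntegrableOn (fun _x : ℝ => s ^ 2 * (a / t)) (Set.Ioc t s) :=
        (integrableOn_const_iff).mpr (Or.inr (by rw [Real.volume_Ioc]; exact ENNReal.ofReal_lt_top))
      have hg1 : IntegrableOn (fun x : ℝ => s ^ 2 * (a / t) - s ^ 2 * f x) (Set.Ioc t s) :=
        hconst.sub (hI2.const_mul _)
      have hg2 : IntegrableOn
          (fun x : ℝ => s ^ 2 * (a / t) - s ^ 2 * f x - a / t * x ^ 2) (Set.Ioc t s) :=
        hg1.sub (hI3.const_mul _)
      rw [heq, integral_add hg2 hI1, integral_sub hg1 (hI3.const_mul _),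
          integral_sub hconst (hI2.const_mul _),
          setIntegral_const, measureReal_def, integral_const_mul, integral_const_mul, hvol]
      simp only [smul_eq_mul]
      ring
    have hx2val : ∫ x in Set.Ioc t s, (x : ℝ) ^ 2 = (s ^ 3 - t ^ 3) / 3 := by
      rw [← intervalIntegral.integral_of_le hts, integral_pow]
      norm_num
    have hMst : a / t * (s - t) = b := by
      rw [hs]; field_simp; ring
    have hVlb : a / t * ((s ^ 3 - t ^ 3) / 3) ≤ V := by
      have hMst2 : s ^ 2 * (a / t) * (s - t) = s ^ 2 * b := by rw [mul_assoc, hMst]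
      have hd1 : s ^ 2 * (∫ x in Set.Ioc t s, f x) + a / t * ((s ^ 3 - t ^ 3) / 3)
          - s ^ 2 * b ≤ ∫ x in Set.Ioc t s, x ^ 2 * f x := by
        rw [hexp, hx2val] at h2
        linarith [h2, hMst2]
      have hbs2 : s ^ 2 * b = s ^ 2 * (∫ x in Set.Ioc t s, f x)
          + s ^ 2 * (∫ x in Set.Ioi s, f x) := by rw [hbsplit]; ring
      linarith [h1, hd1, hVsplit, hbs2]
    have has : a * s = t * (a + b) := by
      rw [hs]; field_simp
    have hcube : a ^ 3 * (s ^ 3 - t ^ 3) = t ^ 3 * ((a + b) ^ 3 - a ^ 3) := by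
      linear_combination ((a * s) ^ 2 + (a * s) * (t * (a + b)) + (t * (a + b)) ^ 2) * has
    have h3t : (0:ℝ) < 3 * t := by linarith
    have e1 : a * (s ^ 3 - t ^ 3) ≤ 3 * t * V := by
      rw [div_mul_eq_mul_div, div_le_iff₀ ht] at hVlb
      linarith [hVlb]
    have e2 : t ^ 3 * ((a + b) ^ 3 - a ^ 3) ≤ 3 * t * V * a ^ 2 := by
      have h5 := mul_le_mul_of_nonneg_right e1 (sq_nonneg a)
      linarith [h5, hcube]
    have e4 : t ^ 2 * ((a + b) ^ 3 - a ^ 3) ≤ 3 * V * a ^ 2 := by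
      have h : t * (t ^ 2 * ((a + b) ^ 3 - a ^ 3)) ≤ t * (3 * V * a ^ 2) := by
        linarith [e2]
      exact le_of_mul_le_mul_left h ht
    have e3 : b ^ 2 ≤ 2 * ((a + b) ^ 3 - a ^ 3) := by
      nlinarith [mul_nonneg ha0 hb0, mul_nonneg (mul_nonneg ha0 hb0) ha0, sq_nonneg a, sq_nonneg b]
    linarith [mul_le_mul_of_nonneg_left e3 (sq_nonneg t), e4]


/-- Gaussian inequality for symmetric unimodal distributions: if `X` has a density `f`
(w.r.t. Lebesgue measure) which is symmetric about `0` and nonincreasing on `[0, ∞)`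
(unimodal with mode `0`), with variance `σ²`, then for every `k > 0`,
`P(|X| ≥ kσ) ≤ 1/(1 + k/√3)`. -/
theorem stmt_5 {Ω : Type*} [MeasureSpace Ω] [IsProbabilityMeasure (ℙ : Measure Ω)]
    (X : Ω → ℝ) (hX : Measurable X) (f : ℝ → ℝ) (hf : Measurable f)
    (hf0 : ∀ t, 0 ≤ f t)
    (hdens : Measure.map X ℙ = volume.withDensity (fun t => ENNReal.ofReal (f t)))
    (hsym : ∀ t, f (-t) = f t) (hmono : AntitoneOn f (Set.Ici 0))
    (σ : ℝ) (hσ : 0 < σ)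
    (hL2 : Integrable (fun ω => (X ω) ^ 2) ℙ)
    (hvar : ∫ ω, (X ω) ^ 2 ∂ℙ = σ ^ 2) :
    ∀ k : ℝ, 0 < k →
      (ℙ {ω | k * σ ≤ |X ω|}).toReal ≤ 1 / (1 + k / Real.sqrt 3) := by
  -- basic measurability and normalization facts
  have hprob : IsProbabilityMeasure (Measure.map X ℙ) := Measure.isProbabilityMeasure_map hX.aemeasurable
  have huniv : (volume.withDensity (fun x => ENNReal.ofReal (f x))) Set.univ = 1 := by
    rw [← hdens]; exact measure_univ
  have hlint1 : ∫⁻ x, ENNReal.ofReal (f x) = 1 := by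
    have h := withDensity_apply (μ := volume) (fun x => ENNReal.ofReal (f x)) MeasurableSet.univ
    rw [setLIntegral_univ] at h
    rw [← h]; exact huniv
  have hf_int : Integrable f := by
    refine ⟨hf.aestronglyMeasurable, ?_⟩
    rw [hasFiniteIntegral_iff_ofReal (ae_of_all _ hf0), hlint1]
    exact ENNReal.one_lt_top
  have hdens' : Measure.map X ℙ = volume.withDensity (fun x => ((f x).toNNReal : ℝ≥0∞)) := hdens
  have htoNN : Measurable fun x => (f x).toNNReal := measurable_real_toNNReal.comp hf
  have hsmul : (fun x : ℝ => (f x).toNNReal • x ^ 2) = fun x => x ^ 2 * f x := by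
    funext x
    rw [NNReal.smul_def, Real.coe_toNNReal _ (hf0 x), smul_eq_mul, mul_comm]
  have hvar' : ∫ x, x ^ 2 * f x = σ ^ 2 := by
    have h1 : ∫ ω, (X ω) ^ 2 ∂ℙ = ∫ x, x ^ 2 ∂(Measure.map X ℙ) :=
      (integral_map hX.aemeasurable (measurable_id.pow_const 2).aestronglyMeasurable).symm
    rw [hdens', integral_withDensity_eq_integral_smul htoNN, hsmul] at h1
    rw [← h1, hvar]
  have hx2f_int : Integrable (fun x => x ^ 2 * f x) := by
    have h1 : Integrable (fun x : ℝ => x ^ 2) (Measure.map X ℙ) :=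
      (integrable_map_measure (measurable_id.pow_const 2).aestronglyMeasurable
        hX.aemeasurable).mpr hL2
    rw [hdens', integrable_withDensity_iff_integrable_smul htoNN, hsmul] at h1
    exact h1
  have htot : ∫ x, f x = 1 := by
    rw [integral_eq_lintegral_of_nonneg_ae (ae_of_all _ hf0) hf.aestronglyMeasurable, hlint1]
    simp
  -- symmetry
  have heven : ∀ g : ℝ → ℝ, Integrable g → (∀ x, g (-x) = g x) →
      2 * ∫ x in Set.Ioi (0:ℝ), g x = ∫ x, g x := by
    intro g hg hgsym
    have h1 : ∫ x in Set.Iic (0:ℝ), g x = ∫ x in Set.Ioi (0:ℝ), g x := by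
      have h2 := integral_comp_neg_Ioi (0:ℝ) g
      rw [neg_zero] at h2
      rw [← h2]
      simp only [hgsym]
    rw [← intervalIntegral.integral_Iic_add_Ioi hg.integrableOn hg.integrableOn, h1]
    ring
  have hIoi0f : ∫ x in Set.Ioi (0:ℝ), f x = 1 / 2 := by
    have h := heven f hf_int hsym
    rw [htot] at h
    linarith
  intro k hk
  set t := k * σ with htdef
  have ht : 0 < t := mul_pos hk hσ
  set a := ∫ x in Set.Ioc (0:ℝ) t, f x with hadef
  set b := ∫ x in Set.Ioi t, f x with hbdef
  set V := ∫ x in Set.Ioi t, x ^ 2 * f x with hVdef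
  have ha0 : 0 ≤ a := setIntegral_nonneg measurableSet_Ioc (fun x _ => hf0 x)
  have hb0 : 0 ≤ b := setIntegral_nonneg measurableSet_Ioi (fun x _ => hf0 x)
  have hab : a + b = 1 / 2 := by
    rw [hadef, hbdef, ← setIntegral_union (Set.Ioc_disjoint_Ioi le_rfl) measurableSet_Ioi
      hf_int.integrableOn hf_int.integrableOn, Set.Ioc_union_Ioi_eq_Ioi ht.le, hIoi0f]
  have hVle : 2 * V ≤ σ ^ 2 := by
    have hevenx : ∀ x : ℝ, (-x) ^ 2 * f (-x) = x ^ 2 * f x := fun x => by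
      rw [hsym x, neg_pow]; ring
    have h2 := heven _ hx2f_int hevenx
    rw [hvar'] at h2
    have h3 : V ≤ ∫ x in Set.Ioi (0:ℝ), x ^ 2 * f x := by
      rw [hVdef]
      exact setIntegral_mono_set hx2f_int.integrableOn
        (ae_of_all _ fun x => mul_nonneg (sq_nonneg x) (hf0 x))
        (HasSubset.Subset.eventuallyLE (Set.Ioi_subset_Ioi ht.le))
    linarith
  -- probability as an integral
  have hSset : {x : ℝ | t ≤ |x|} = Set.Iic (-t) ∪ Set.Ici t := by
    ext x
    simp only [Set.mem_setOf_eq, Set.mem_union, Set.mem_Iic, Set.mem_Ici, le_abs, le_neg]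
    tauto
  have hSmeas : MeasurableSet {x : ℝ | t ≤ |x|} := by
    rw [hSset]; exact measurableSet_Iic.union measurableSet_Ici
  have hPtoReal : (ℙ {ω | t ≤ |X ω|}).toReal = 2 * b := by
    have hPeq : ℙ {ω | t ≤ |X ω|}
        = (volume.withDensity (fun x => ENNReal.ofReal (f x))) {x : ℝ | t ≤ |x|} := by
      rw [show {ω | t ≤ |X ω|} = X ⁻¹' {x : ℝ | t ≤ |x|} from rfl,
        ← Measure.map_apply hX hSmeas, hdens]
    have h1 : (ℙ {ω | t ≤ |X ω|}).toReal = ∫ x in {x : ℝ | t ≤ |x|}, f x := by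
      rw [hPeq, withDensity_apply _ hSmeas,
        integral_eq_lintegral_of_nonneg_ae (ae_of_all _ hf0)
          hf.aestronglyMeasurable.restrict]
    have h2 : ∫ x in {x : ℝ | t ≤ |x|}, f x
        = (∫ x in Set.Iic (-t), f x) + ∫ x in Set.Ici t, f x := by
      rw [hSset, setIntegral_union (Set.Iic_disjoint_Ici.mpr (by
        intro h; linarith)) measurableSet_Ici hf_int.integrableOn hf_int.integrableOn]
    have hleft : ∫ x in Set.Iic (-t), f x = ∫ x in Set.Ioi t, f x := by
      rw [← integral_comp_neg_Ioi]
      simp only [hsym]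
    have hright : ∫ x in Set.Ici t, f x = ∫ x in Set.Ioi t, f x :=
      integral_Ici_eq_integral_Ioi
    rw [h1, h2, hleft, hright, hbdef]
    ring
  -- core inequality
  have hcore : t ^ 2 * b ^ 2 ≤ 6 * V * a ^ 2 :=
    core_ineq f hf0 hmono hf_int hx2f_int t ht a b V hadef hbdef hVdef hab
  have hsq3 : Real.sqrt 3 ^ 2 = 3 := Real.sq_sqrt (by norm_num)
  have hsq3pos : 0 < Real.sqrt 3 := Real.sqrt_pos.mpr (by norm_num)
  have hfin : t * b ≤ Real.sqrt 3 * σ * a := by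
    have h6 : (t * b) ^ 2 ≤ (Real.sqrt 3 * σ * a) ^ 2 := by
      have e : (Real.sqrt 3 * σ * a) ^ 2 = 3 * (σ ^ 2 * a ^ 2) := by
        rw [mul_pow, mul_pow, hsq3]; ring
      rw [e]
      have h7 := mul_le_mul_of_nonneg_right hVle (sq_nonneg a)
      nlinarith [hcore, h7]
    calc t * b = Real.sqrt ((t * b) ^ 2) := (Real.sqrt_sq (mul_nonneg ht.le hb0)).symm
      _ ≤ Real.sqrt ((Real.sqrt 3 * σ * a) ^ 2) := Real.sqrt_le_sqrt h6
      _ = Real.sqrt 3 * σ * a := Real.sqrt_sq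
          (mul_nonneg (mul_nonneg hsq3pos.le hσ.le) ha0)
  have h8 : k * b ≤ Real.sqrt 3 * a := by
    have h9 : σ * (k * b) ≤ σ * (Real.sqrt 3 * a) := by
      rw [htdef] at hfin; nlinarith [hfin]
    exact le_of_mul_le_mul_left h9 hσ
  have h10 : k * b / Real.sqrt 3 ≤ a := (div_le_iff₀ hsq3pos).mpr (by nlinarith [h8])
  have hden : 0 < 1 + k / Real.sqrt 3 := by positivity
  rw [hPtoReal, le_div_iff₀ hden]
  calc 2 * b * (1 + k / Real.sqrt 3) = 2 * b + 2 * (k * b / Real.sqrt 3) := by ring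
    _ ≤ 2 * b + 2 * a := by linarith [h10]
    _ = 1 := by linarith [hab]
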